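/- Let (X, d) be a strictly intrinsic metric space (every pair of points of X is joined by a geodesic), K ∈ ℝ, N < 0, and let f : X → [−∞,+∞] be lower semicontinuous with D[f] dense in X. If for every y₀ ∈ {x ∈ X : f(x) > −∞} there exists an EVI_{K,N} gradient curve (y_t)_{t∈(0,T)} for f starting from y₀, then f is (K,N)-convex. -/

import Mathlib

open Filter MeasureTheory Set
open scoped ENNReal Topology

noncomputable section

namespace KNPaper

variable {X : Type*} [MetricSpace X]

/-- A geodesic parametrized on `[0,1]`: `d(γ s, γ t) = |t - s| * d(γ 0, γ 1)`. -/
def IsGeodesic (γ : ℝ → X) : Prop :=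
  ∀ s ∈ Set.Icc (0:ℝ) 1, ∀ t ∈ Set.Icc (0:ℝ) 1,
    dist (γ s) (γ t) = |t - s| * dist (γ 0) (γ 1)

/-- Extended exponential `EReal → ℝ≥0∞`, with `exp ⊥ = 0` and `exp ⊤ = ⊤`. -/
def eexp (x : EReal) : ℝ≥0∞ :=
  if x = ⊤ then ⊤ else if x = ⊥ then 0 else ENNReal.ofReal (Real.exp x.toReal)

/-- The nonnegative part of an extended real, valued in `ℝ≥0∞`. -/
def epos (x : EReal) : ℝ≥0∞ :=
  if x = ⊤ then ⊤ else ENNReal.ofReal x.toReal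

/-- `f_N := exp (-f/N)`, with the conventions `exp(-∞) = 0`, `exp(+∞) = +∞`. -/
def fN (f : X → EReal) (N : ℝ) (x : X) : ℝ≥0∞ :=
  eexp (((-1/N : ℝ) : EReal) * f x)

/-- The finiteness domain `D[f]`. -/
def Dom (f : X → EReal) : Set X := {x | f x ≠ ⊤ ∧ f x ≠ ⊥}

/-- The extended domain `D*[f]`. -/
def DomStar (f : X → EReal) : Set X := {x | f x ≠ ⊤}

/-- The function `𝔰_{K,N}`. -/
def sKN (K N θ : ℝ) : ℝ :=
  if K < 0 then Real.sin (θ * Real.sqrt (K/N)) / Real.sqrt (K/N)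
  else if K = 0 then θ
  else Real.sinh (θ * Real.sqrt (-K/N)) / Real.sqrt (-K/N)

/-- The function `𝔠_{K,N}`. -/
def cKN (K N θ : ℝ) : ℝ :=
  if K < 0 then Real.cos (θ * Real.sqrt (K/N))
  else if K = 0 then 1
  else Real.cosh (θ * Real.sqrt (-K/N))

/-- The distortion coefficient `σ_{K,N}^{(t)}(θ)`, valued in `[0,∞]`. -/
def sigmaKN (K N t θ : ℝ) : ℝ≥0∞ :=
  if (N * Real.pi ^ 2 < K * θ ^ 2 ∧ K * θ ^ 2 < 0) ∨ 0 < K * θ ^ 2 then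
    ENNReal.ofReal (sKN K N (t * θ) / sKN K N θ)
  else if K * θ ^ 2 = 0 then ENNReal.ofReal t
  else ⊤

/-- `(K,N)`-convexity of `f` on a subset `s` (with `N < 0`). -/
def KNConvexOn (f : X → EReal) (K N : ℝ) (s : Set X) : Prop :=
  ∀ x₀ ∈ s, ∀ x₁ ∈ s, f x₀ ≠ ⊤ → f x₁ ≠ ⊤ →
    (K < 0 → dist x₀ x₁ < Real.pi * Real.sqrt (N / K)) →
    ∃ γ : ℝ → X, IsGeodesic γ ∧ (∀ t ∈ Set.Icc (0:ℝ) 1, γ t ∈ s) ∧ γ 0 = x₀ ∧ γ 1 = x₁ ∧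
      ∀ t ∈ Set.Icc (0:ℝ) 1,
        fN f N (γ t) ≤ sigmaKN K N (1 - t) (dist x₀ x₁) * fN f N x₀
          + sigmaKN K N t (dist x₀ x₁) * fN f N x₁

/-- `(K,N)`-convexity of `f` (with `N < 0`). -/
def KNConvex (f : X → EReal) (K N : ℝ) : Prop := KNConvexOn f K N Set.univ

/-- `λ`-convexity of an extended-real-valued function along geodesics. -/
def LambdaConvex (g : X → EReal) (lam : ℝ) : Prop :=
  ∀ x₀ x₁ : X, x₀ ∈ Dom g → x₁ ∈ Dom g →
    ∃ γ : ℝ → X, IsGeodesic γ ∧ γ 0 = x₀ ∧ γ 1 = x₁ ∧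
      ∀ t ∈ Set.Icc (0:ℝ) 1,
        g (γ t) ≤ (((1 - t) * (g x₀).toReal + t * (g x₁).toReal
          - lam / 2 * (t * (1 - t)) * dist x₀ x₁ ^ 2 : ℝ) : EReal)

/-- Upper right Dini derivative of a real function, valued in `EReal`. -/
def diniUR (g : ℝ → ℝ) (t : ℝ) : EReal :=
  Filter.limsup (fun h : ℝ => (((g (t + h) - g t) / h : ℝ) : EReal)) (𝓝[>] (0:ℝ))

/-- The time interval `(0,T)` for `T ∈ (0,∞]`, as a set of reals. -/
def domT (T : ℝ≥0∞) : Set ℝ := {t : ℝ | 0 < t ∧ ENNReal.ofReal t < T}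

/-- `EVI_λ` gradient curve for `g` on `(0,T)`. -/
def IsEVIlam (g : X → EReal) (lam : ℝ) (T : ℝ≥0∞) (z : ℝ → X) : Prop :=
  0 < T ∧ ContinuousOn z (domT T) ∧ (∀ t ∈ domT T, z t ∈ Dom g) ∧
    ∀ t ∈ domT T, ∀ x ∈ Dom g,
      diniUR (fun s => dist (z s) x ^ 2 / 2) t + ((lam / 2 * dist (z t) x ^ 2 : ℝ) : EReal)
        ≤ (((g x).toReal - (g (z t)).toReal : ℝ) : EReal)

/-- `EVI_{K,N}` gradient curve for `f` on `(0,T)` (with `N < 0`). -/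
def IsEVIKN (f : X → EReal) (K N : ℝ) (T : ℝ≥0∞) (y : ℝ → X) : Prop :=
  0 < T ∧ ContinuousOn y (domT T) ∧ (∀ t ∈ domT T, y t ∈ Dom f) ∧
    ∀ t ∈ domT T, ∀ x ∈ closure (Dom f),
      (K < 0 → dist (y t) x < Real.pi * Real.sqrt (N / K)) →
      diniUR (fun s => sKN K N (dist (y s) x / 2) ^ 2) t
          + ((K * sKN K N (dist (y t) x / 2) ^ 2 : ℝ) : EReal)
        ≤ ((N / 2 : ℝ) : EReal) * (1 - ((fN f N x / fN f N (y t) : ℝ≥0∞) : EReal))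

/-- A curve starts at `y₀` if `y_t → y₀` as `t ↓ 0`. -/
def StartsAt (y : ℝ → X) (y₀ : X) : Prop := Filter.Tendsto y (𝓝[>] (0:ℝ)) (𝓝 y₀)

/-- The class `𝒞` of continuous curves on `(0,T)` with values in `D[f]`. -/
def InC (f : X → EReal) (T : ℝ≥0∞) (y : ℝ → X) : Prop :=
  0 < T ∧ ContinuousOn y (domT T) ∧ ∀ t ∈ domT T, y t ∈ Dom f

/-- The class `𝒞'`: curves in `𝒞` along which `f` is non-increasing. -/
def InC' (f : X → EReal) (T : ℝ≥0∞) (y : ℝ → X) : Prop :=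
  InC f T y ∧ ∀ s ∈ domT T, ∀ t ∈ domT T, s ≤ t → f (y t) ≤ f (y s)

/-- The class `𝒞''_N`: curves in `𝒞'` with `∫₀^{min(T,1)} f_N(y_t) dt < ∞`. -/
def InC'' (f : X → EReal) (N : ℝ) (T : ℝ≥0∞) (y : ℝ → X) : Prop :=
  InC' f T y ∧ ∫⁻ t in Set.Ioo (0:ℝ) ((min T 1).toReal), fN f N (y t) < ⊤

/-- The function `α(t) = -N ∫₀ᵗ f_N(y_r)⁻¹ dr`. -/
def alphaMap (f : X → EReal) (N : ℝ) (y : ℝ → X) (t : ℝ) : ℝ :=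
  -N * ∫ r in Set.Ioo (0:ℝ) t, ((fN f N (y r))⁻¹).toReal

/-- The final time `T' = lim_{t→T⁻} α(t)` of the reparametrized curve `ℛ₁(y)`. -/
def R1T (f : X → EReal) (N : ℝ) (T : ℝ≥0∞) (y : ℝ → X) : ℝ≥0∞ :=
  ⨆ t ∈ domT T, ENNReal.ofReal (alphaMap f N y t)

/-- The reparametrized curve `ℛ₁(y) = y ∘ φ`, `φ = α⁻¹`. -/
def R1fun (f : X → EReal) (N : ℝ) (T : ℝ≥0∞) (y : ℝ → X) : ℝ → X :=
  y ∘ Function.invFunOn (alphaMap f N y) (domT T)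

/-- The function `β(s) = -(1/N) ∫₀ˢ f_N(z_r) dr`. -/
def betaMap (f : X → EReal) (N : ℝ) (z : ℝ → X) (s : ℝ) : ℝ :=
  -(1/N) * ∫ r in Set.Ioo (0:ℝ) s, (fN f N (z r)).toReal

/-- The final time `T = lim_{s→T'⁻} β(s)` of the reparametrized curve `ℛ₂(z)`. -/
def R2T (f : X → EReal) (N : ℝ) (T' : ℝ≥0∞) (z : ℝ → X) : ℝ≥0∞ :=
  ⨆ s ∈ domT T', ENNReal.ofReal (betaMap f N z s)

/-- The reparametrized curve `ℛ₂(z) = z ∘ ψ`, `ψ = β⁻¹`. -/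
def R2fun (f : X → EReal) (N : ℝ) (T' : ℝ≥0∞) (z : ℝ → X) : ℝ → X :=
  z ∘ Function.invFunOn (betaMap f N z) (domT T')

/-- The descending slope `|D⁻f|(y) = limsup_{z→y} (f(y)-f(z))⁺ / d(z,y)`, in `[0,∞]`. -/
def descSlope (f : X → EReal) (y : X) : ℝ≥0∞ :=
  Filter.limsup (fun z : X => epos (f y - f z) / ENNReal.ofReal (dist z y)) (𝓝[≠] y)

/-- Directional derivative `g'(γ 0; ·) = liminf_{t↓0} (g(γ t) - g(γ 0))/t` along a curve. -/
def dirDeriv (g : X → EReal) (γ : ℝ → X) : EReal :=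
  Filter.liminf (fun t : ℝ => (g (γ t) - g (γ 0)) * (((1/t : ℝ)) : EReal)) (𝓝[>] (0:ℝ))

/-- The quantity `[ẏ, z]_{t₀} = sup_{0<s≤1} (1/(2s)) (d⁺/dt)|_{t₀} d(y_t, z_s)²`. -/
def bracket (y z : ℝ → X) (t₀ : ℝ) : EReal :=
  ⨆ s ∈ Set.Ioc (0:ℝ) 1,
    (((1 / (2 * s) : ℝ)) : EReal) * diniUR (fun t => dist (y t) (z s) ^ 2) t₀

/-- Metric speed `|γ̇|(t) = lim_{h→0} d(γ(t+h), γ(t))/|h| = v`. -/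
def HasMetricSpeedAt (γ : ℝ → X) (t v : ℝ) : Prop :=
  Filter.Tendsto (fun h : ℝ => dist (γ (t + h)) (γ t) / |h|) (𝓝[≠] (0:ℝ)) (𝓝 v)

open Classical in
/-- The metric speed of a curve at a time (defaulting to `0` when it does not exist). -/
def metricSpeed (γ : ℝ → X) (t : ℝ) : ℝ :=
  if h : ∃ v, HasMetricSpeedAt γ t v then h.choose else 0

/-- Metric absolute continuity on `[s,t]` with derivative control in `Lᵖ`. -/
def MetricACWith (p : ℝ≥0∞) (γ : ℝ → X) (s t : ℝ) : Prop :=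
  ∃ g : ℝ → ℝ, MeasureTheory.MemLp g p (MeasureTheory.volume.restrict (Set.Icc s t)) ∧
    ∀ u ∈ Set.Icc s t, ∀ v ∈ Set.Icc s t, u ≤ v → dist (γ u) (γ v) ≤ ∫ r in u..v, g r

/-- `ACᵖ_loc` on a set: metric absolute continuity on every compact subinterval. -/
def LocACOn (p : ℝ≥0∞) (γ : ℝ → X) (I : Set ℝ) : Prop :=
  ∀ s t : ℝ, s ≤ t → Set.Icc s t ⊆ I → MetricACWith p γ s t

/-- Curve of maximal slope for `f` on `(0,T)`. -/
def IsMaxSlopeCurve (f : X → EReal) (T : ℝ≥0∞) (y : ℝ → X) : Prop :=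
  0 < T ∧ (∀ t ∈ domT T, y t ∈ Dom f) ∧
  LocACOn 1 y (domT T) ∧
  LocACOn 1 (fun t => (f (y t)).toReal) (domT T) ∧
  (∀ᵐ t ∂(MeasureTheory.volume.restrict (domT T)), ∃ v : ℝ, HasMetricSpeedAt y t v) ∧
  ∀ᵐ t ∂(MeasureTheory.volume.restrict (domT T)),
    ∃ d : ℝ, HasDerivAt (fun s => (f (y s)).toReal) d t ∧
      ENNReal.ofReal (2⁻¹ * metricSpeed y t ^ 2) + 2⁻¹ * descSlope f (y t) ^ 2
        ≤ ENNReal.ofReal (-d)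

section KNAuxSec
open Real

/-- difference of squared sines factorization -/
lemma sin_sq_sub (x y : ℝ) : sin x ^ 2 - sin y ^ 2 = sin (x + y) * sin (x - y) := by
  have h1 := Real.sin_add x y
  have h2 := Real.sin_sub x y
  have h3 := Real.sin_sq_add_cos_sq x
  have h4 := Real.sin_sq_add_cos_sq y
  rw [h1, h2]
  linear_combination sin y ^ 2 * h3 - sin x ^ 2 * h4

lemma sinh_sq_sub (x y : ℝ) : sinh x ^ 2 - sinh y ^ 2 = sinh (x + y) * sinh (x - y) := by
  have h1 := Real.sinh_add x y
  have h2 := Real.sinh_sub x y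
  have h3 := Real.cosh_sq x
  have h4 := Real.cosh_sq y
  rw [h1, h2]
  linear_combination sinh y ^ 2 * h3 - sinh x ^ 2 * h4

lemma bracket_sin (P Q V : ℝ) :
    sin P * sin ((P + 2*Q - V)/2) - sin Q * sin ((P + V)/2)
      = sin (P + Q) * sin ((P - V)/2) := by
  have h1 := Real.two_mul_sin_mul_sin P ((P + 2*Q - V)/2)
  have h2 := Real.two_mul_sin_mul_sin Q ((P + V)/2)
  have h3 := Real.two_mul_sin_mul_sin (P + Q) ((P - V)/2)
  have h4 : Real.cos (P - (P + 2*Q - V)/2) = Real.cos (Q - (P + V)/2) := by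
    rw [show P - (P + 2*Q - V)/2 = -(Q - (P + V)/2) by ring, Real.cos_neg]
  have h5 : Real.cos (P + (P + 2*Q - V)/2) = Real.cos ((P + Q) + (P - V)/2) := by
    norm_num [show P + (P + 2*Q - V)/2 = (P + Q) + (P - V)/2 by ring]
  have h6 : Real.cos (Q + (P + V)/2) = Real.cos ((P + Q) - (P - V)/2) := by
    norm_num [show Q + (P + V)/2 = (P + Q) - (P - V)/2 by ring]
  linarith

lemma two_mul_sinh_mul_sinh (x y : ℝ) :
    2 * sinh x * sinh y = cosh (x + y) - cosh (x - y) := by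
  rw [Real.cosh_add, Real.cosh_sub]; ring

lemma bracket_sinh (P Q V : ℝ) :
    sinh P * sinh ((P + 2*Q - V)/2) - sinh Q * sinh ((P + V)/2)
      = sinh (P + Q) * sinh ((P - V)/2) := by
  have h1 := two_mul_sinh_mul_sinh P ((P + 2*Q - V)/2)
  have h2 := two_mul_sinh_mul_sinh Q ((P + V)/2)
  have h3 := two_mul_sinh_mul_sinh (P + Q) ((P - V)/2)
  have h4 : Real.cosh (P - (P + 2*Q - V)/2) = Real.cosh (Q - (P + V)/2) := by
    rw [show P - (P + 2*Q - V)/2 = -(Q - (P + V)/2) by ring, Real.cosh_neg]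
  have h5 : Real.cosh (P + (P + 2*Q - V)/2) = Real.cosh ((P + Q) + (P - V)/2) := by
    norm_num [show P + (P + 2*Q - V)/2 = (P + Q) + (P - V)/2 by ring]
  have h6 : Real.cosh (Q + (P + V)/2) = Real.cosh ((P + Q) - (P - V)/2) := by
    norm_num [show Q + (P + V)/2 = (P + Q) - (P - V)/2 by ring]
  linarith

/-- the key 1D comparison identity/inequality, sine case -/
lemma key_sin (P Q V : ℝ) (h0 : 0 ≤ P + Q) (hπ : P + Q ≤ π) :
    sin Q * sin (P/2) ^ 2 + sin P * sin (Q/2) ^ 2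
      ≤ sin Q * sin (V/2) ^ 2 + sin P * sin ((P + Q - V)/2) ^ 2 := by
  have d1 : sin (V/2) ^ 2 - sin (P/2) ^ 2 = -(sin ((P+V)/2) * sin ((P-V)/2)) := by
    have := sin_sq_sub (V/2) (P/2)
    rw [show V/2 + P/2 = (P+V)/2 by ring, show V/2 - P/2 = -((P-V)/2) by ring,
      Real.sin_neg] at this
    linarith
  have d2 : sin ((P + Q - V)/2) ^ 2 - sin (Q/2) ^ 2
      = sin ((P + 2*Q - V)/2) * sin ((P-V)/2) := by
    have := sin_sq_sub ((P + Q - V)/2) (Q/2)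
    rw [show (P + Q - V)/2 + Q/2 = (P + 2*Q - V)/2 by ring,
      show (P + Q - V)/2 - Q/2 = (P-V)/2 by ring] at this
    linarith
  have hb := bracket_sin P Q V
  have hs : 0 ≤ sin (P + Q) := Real.sin_nonneg_of_nonneg_of_le_pi h0 hπ
  have key : (sin Q * sin (V/2) ^ 2 + sin P * sin ((P + Q - V)/2) ^ 2)
      - (sin Q * sin (P/2) ^ 2 + sin P * sin (Q/2) ^ 2)
      = sin (P + Q) * sin ((P - V)/2) ^ 2 := by
    linear_combination sin Q * d1 + sin P * d2 + sin ((P - V)/2) * hb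
  nlinarith [sq_nonneg (sin ((P - V)/2)), mul_nonneg hs (sq_nonneg (sin ((P - V)/2)))]

/-- the key 1D comparison identity/inequality, sinh case -/
lemma key_sinh (P Q V : ℝ) (h0 : 0 ≤ P + Q) :
    sinh Q * sinh (P/2) ^ 2 + sinh P * sinh (Q/2) ^ 2
      ≤ sinh Q * sinh (V/2) ^ 2 + sinh P * sinh ((P + Q - V)/2) ^ 2 := by
  have d1 : sinh (V/2) ^ 2 - sinh (P/2) ^ 2 = -(sinh ((P+V)/2) * sinh ((P-V)/2)) := by
    have := sinh_sq_sub (V/2) (P/2)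
    rw [show V/2 + P/2 = (P+V)/2 by ring, show V/2 - P/2 = -((P-V)/2) by ring,
      Real.sinh_neg] at this
    linarith
  have d2 : sinh ((P + Q - V)/2) ^ 2 - sinh (Q/2) ^ 2
      = sinh ((P + 2*Q - V)/2) * sinh ((P-V)/2) := by
    have := sinh_sq_sub ((P + Q - V)/2) (Q/2)
    rw [show (P + Q - V)/2 + Q/2 = (P + 2*Q - V)/2 by ring,
      show (P + Q - V)/2 - Q/2 = (P-V)/2 by ring] at this
    linarith
  have hb := bracket_sinh P Q V
  have hs : 0 ≤ sinh (P + Q) := Real.sinh_nonneg_iff.2 h0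
  have key : (sinh Q * sinh (V/2) ^ 2 + sinh P * sinh ((P + Q - V)/2) ^ 2)
      - (sinh Q * sinh (P/2) ^ 2 + sinh P * sinh (Q/2) ^ 2)
      = sinh (P + Q) * sinh ((P - V)/2) ^ 2 := by
    linear_combination sinh Q * d1 + sinh P * d2 + sinh ((P - V)/2) * hb
  nlinarith [sq_nonneg (sinh ((P - V)/2)), mul_nonneg hs (sq_nonneg (sinh ((P - V)/2)))]

lemma cos_eq_one_sub (x : ℝ) : cos x = 1 - 2 * sin (x/2) ^ 2 := by
  have h := Real.cos_two_mul' (x/2)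
  have h2 := Real.sin_sq_add_cos_sq (x/2)
  rw [show 2 * (x/2) = x by ring] at h
  linarith

lemma cosh_eq_one_add (x : ℝ) : cosh x = 1 + 2 * sinh (x/2) ^ 2 := by
  have h := Real.cosh_two_mul (x/2)
  have h2 := Real.cosh_sq (x/2)
  rw [show 2 * (x/2) = x by ring] at h
  linarith


section Part2
open Real

variable {K N : ℝ}

/-- `gg K N d = 𝔰_{K,N}(d/2)²`. -/
def gg (K N d : ℝ) : ℝ := sKN K N (d/2) ^ 2

lemma sKN_of_neg (hK : K < 0) (x : ℝ) :
    sKN K N x = sin (x * Real.sqrt (K/N)) / Real.sqrt (K/N) := by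
  simp [sKN, hK]

lemma sKN_of_zero (x : ℝ) : sKN 0 N x = x := by
  simp [sKN]

lemma sKN_of_pos (hK : 0 < K) (x : ℝ) :
    sKN K N x = sinh (x * Real.sqrt (-K/N)) / Real.sqrt (-K/N) := by
  simp [sKN, not_lt_of_gt hK, hK.ne']

lemma sqrtKN_pos (hN : N < 0) (hK : K < 0) : 0 < Real.sqrt (K/N) :=
  Real.sqrt_pos.2 (div_pos_iff.2 (Or.inr ⟨hK, hN⟩))

lemma sqrtKN_pos' (hN : N < 0) (hK : 0 < K) : 0 < Real.sqrt (-K/N) :=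
  Real.sqrt_pos.2 (div_pos_iff.2 (Or.inr ⟨neg_lt_zero.2 hK, hN⟩))

lemma sKN_zero_arg : sKN K N 0 = 0 := by
  rcases lt_trichotomy K 0 with hK | hK | hK
  · simp [sKN_of_neg hK]
  · subst hK; simp [sKN_of_zero]
  · simp [sKN_of_pos hK]

lemma gg_nonneg (d : ℝ) : 0 ≤ gg K N d := sq_nonneg _

lemma gg_zero : gg K N 0 = 0 := by
  simp [gg, sKN_zero_arg]

lemma sKN_nonneg (hN : N < 0) {x : ℝ} (hx : 0 ≤ x)
    (hπ : K < 0 → x * Real.sqrt (K/N) ≤ π) : 0 ≤ sKN K N x := by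
  rcases lt_trichotomy K 0 with hK | hK | hK
  · rw [sKN_of_neg hK]
    have ha := sqrtKN_pos hN hK
    exact div_nonneg (Real.sin_nonneg_of_nonneg_of_le_pi (by positivity) (hπ hK)) ha.le
  · subst hK; rwa [sKN_of_zero]
  · rw [sKN_of_pos hK]
    have ha := sqrtKN_pos' hN hK
    exact div_nonneg (Real.sinh_nonneg_iff.2 (by positivity)) ha.le

lemma sKN_pos (hN : N < 0) {x : ℝ} (hx : 0 < x)
    (hπ : K < 0 → x * Real.sqrt (K/N) < π) : 0 < sKN K N x := by
  rcases lt_trichotomy K 0 with hK | hK | hK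
  · rw [sKN_of_neg hK]
    have ha := sqrtKN_pos hN hK
    exact div_pos (Real.sin_pos_of_pos_of_lt_pi (by positivity) (hπ hK)) ha
  · subst hK; rwa [sKN_of_zero]
  · rw [sKN_of_pos hK]
    have ha := sqrtKN_pos' hN hK
    exact div_pos (Real.sinh_pos_iff.2 (by positivity)) ha

lemma gg_mono (hN : N < 0) {x y : ℝ} (h0 : 0 ≤ x) (hxy : x ≤ y)
    (hπ : K < 0 → y * Real.sqrt (K/N) ≤ π) : gg K N x ≤ gg K N y := by
  rcases lt_trichotomy K 0 with hK | hK | hK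
  · have ha := sqrtKN_pos hN hK
    set a := Real.sqrt (K/N)
    rw [gg, gg, sKN_of_neg hK, sKN_of_neg hK]
    rw [div_pow, div_pow]
    apply div_le_div_of_nonneg_right ?_ (by positivity)
    have h1 : 0 ≤ x/2 * a := by positivity
    have h2 : x/2*a ≤ y/2*a := by nlinarith
    have h3 : y/2*a ≤ π/2 := by nlinarith [hπ hK]
    have hm : sin (x/2*a) ≤ sin (y/2*a) := by
      apply Real.strictMonoOn_sin.monotoneOn ⟨by linarith [Real.pi_pos], by linarith⟩
        ⟨by nlinarith [Real.pi_pos], by linarith⟩ h2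
    have hx0 : 0 ≤ sin (x/2*a) := Real.sin_nonneg_of_nonneg_of_le_pi h1
      (by linarith [Real.pi_pos])
    exact pow_le_pow_left₀ hx0 hm 2
  · subst hK
    rw [gg, gg, sKN_of_zero, sKN_of_zero]
    nlinarith
  · have ha := sqrtKN_pos' hN hK
    set a := Real.sqrt (-K/N)
    rw [gg, gg, sKN_of_pos hK, sKN_of_pos hK]
    rw [div_pow, div_pow]
    apply div_le_div_of_nonneg_right ?_ (by positivity)
    have hx0 : 0 ≤ sinh (x/2*a) := Real.sinh_nonneg_iff.2 (by positivity)
    have hm : sinh (x/2*a) ≤ sinh (y/2*a) := Real.sinh_le_sinh.2 (by nlinarith)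
    exact pow_le_pow_left₀ hx0 hm 2

lemma oneD (hN : N < 0) (p q v : ℝ) (hp : 0 ≤ p) (hq : 0 ≤ q)
    (hπ : K < 0 → (p + q) * Real.sqrt (K/N) ≤ π) :
    sKN K N q * gg K N p + sKN K N p * gg K N q
      ≤ sKN K N q * gg K N v + sKN K N p * gg K N (p + q - v) := by
  rcases lt_trichotomy K 0 with hK | hK | hK
  · have ha := sqrtKN_pos hN hK
    set a := Real.sqrt (K/N) with hadef
    have e : ∀ u w : ℝ, sKN K N w * gg K N u = sin (w*a) * sin (u*a/2) ^ 2 / a^3 := by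
      intro u w
      rw [gg, sKN_of_neg hK, sKN_of_neg hK, ← hadef, show u/2*a = u*a/2 by ring, div_pow]
      ring
    rw [e p q, e q p, e v q, e (p+q-v) p]
    rw [← add_div, ← add_div]
    apply div_le_div_of_nonneg_right ?_ (by positivity)
    have := key_sin (p*a) (q*a) (v*a) (by positivity) (by nlinarith [hπ hK])
    rw [show p*a + q*a - v*a = (p+q-v)*a by ring] at this
    linarith
  · subst hK
    simp only [gg, sKN_of_zero]
    nlinarith [sq_nonneg (p - v), mul_nonneg (add_nonneg hp hq) (sq_nonneg (p - v))]
  · have ha := sqrtKN_pos' hN hK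
    set a := Real.sqrt (-K/N) with hadef
    have e : ∀ u w : ℝ, sKN K N w * gg K N u = sinh (w*a) * sinh (u*a/2) ^ 2 / a^3 := by
      intro u w
      rw [gg, sKN_of_pos hK, sKN_of_pos hK, ← hadef, show u/2*a = u*a/2 by ring, div_pow]
      ring
    rw [e p q, e q p, e v q, e (p+q-v) p]
    rw [← add_div, ← add_div]
    apply div_le_div_of_nonneg_right ?_ (by positivity)
    have := key_sinh (p*a) (q*a) (v*a) (by positivity)
    rw [show p*a + q*a - v*a = (p+q-v)*a by ring] at this
    linarith

lemma idB (hN : N < 0) (p q : ℝ) :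
    sKN K N q + sKN K N p
      - (2*K/N) * (sKN K N q * gg K N p + sKN K N p * gg K N q) = sKN K N (p + q) := by
  rcases lt_trichotomy K 0 with hK | hK | hK
  · have ha := sqrtKN_pos hN hK
    have haa : Real.sqrt (K/N) ^ 2 = K/N := Real.sq_sqrt (div_pos_iff.2 (Or.inr ⟨hK, hN⟩)).le
    set a := Real.sqrt (K/N) with hadef
    simp only [gg, sKN_of_neg hK, ← hadef]
    have s1 : sin (p*a/2) ^ 2 = (1 - cos (p*a))/2 := by linarith [cos_eq_one_sub (p*a)]
    have s2 : sin (q*a/2) ^ 2 = (1 - cos (q*a))/2 := by linarith [cos_eq_one_sub (q*a)]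
    have hKN : 2*K/N = 2*a^2 := by rw [haa]; ring
    rw [show (p+q)*a = p*a + q*a by ring, show p/2*a = p*a/2 by ring,
      show q/2*a = q*a/2 by ring, div_pow, div_pow, s1, s2, hKN, Real.sin_add]
    field_simp
    ring
  · subst hK
    simp only [gg, sKN_of_zero]
    norm_num
    ring
  · have ha := sqrtKN_pos' hN hK
    have haa : Real.sqrt (-K/N) ^ 2 = -K/N :=
      Real.sq_sqrt (div_pos_iff.2 (Or.inr ⟨neg_lt_zero.2 hK, hN⟩)).le
    set a := Real.sqrt (-K/N) with hadef
    simp only [gg, sKN_of_pos hK, ← hadef]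
    have s1 : sinh (p*a/2) ^ 2 = (cosh (p*a) - 1)/2 := by linarith [cosh_eq_one_add (p*a)]
    have s2 : sinh (q*a/2) ^ 2 = (cosh (q*a) - 1)/2 := by linarith [cosh_eq_one_add (q*a)]
    have hKN : 2*K/N = -(2*a^2) := by rw [haa]; ring
    rw [show (p+q)*a = p*a + q*a by ring, show p/2*a = p*a/2 by ring,
      show q/2*a = q*a/2 by ring, div_pow, div_pow, s1, s2, hKN, Real.sinh_add]
    field_simp
    ring
  
lemma sKN_continuous : Continuous (sKN K N) := by
  rcases lt_trichotomy K 0 with hK | hK | hK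
  · have : (sKN K N) = fun x => sin (x * Real.sqrt (K/N)) / Real.sqrt (K/N) := by
      funext x; exact sKN_of_neg hK x
    rw [this]
    exact (Real.continuous_sin.comp (continuous_id.mul continuous_const)).div_const _
  · subst hK
    have : (sKN 0 N) = fun x : ℝ => x := by funext x; exact sKN_of_zero x
    rw [this]; exact continuous_id
  · have : (sKN K N) = fun x => sinh (x * Real.sqrt (-K/N)) / Real.sqrt (-K/N) := by
      funext x; exact sKN_of_pos hK x
    rw [this]
    exact (Real.continuous_sinh.comp (continuous_id.mul continuous_const)).div_const _

lemma gg_continuous : Continuous (gg K N) :=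
  ((sKN_continuous).comp (continuous_id.div_const 2)).pow 2

end Part2

section Part3
open Real Filter

variable {X : Type*} [MetricSpace X]

lemma eexp_coe (r : ℝ) : eexp (r : EReal) = ENNReal.ofReal (Real.exp r) := by
  simp [eexp]

lemma eexp_bot : eexp (⊥ : EReal) = 0 := by simp [eexp]

lemma eexp_top : eexp (⊤ : EReal) = ⊤ := by simp [eexp]

variable {f : X → EReal} {N : ℝ}

lemma fN_real (hN : N < 0) {x : X} {v : ℝ} (hx : f x = (v : EReal)) :
    fN f N x = ENNReal.ofReal (Real.exp ((-1/N) * v)) := by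
  rw [fN, hx, ← EReal.coe_mul, eexp_coe]

lemma fN_bot (hN : N < 0) {x : X} (hx : f x = ⊥) :
    fN f N x = 0 := by
  have hc : (0:ℝ) < -1/N := div_pos_iff.2 (Or.inr ⟨by norm_num, hN⟩)
  rw [fN, hx, EReal.coe_mul_bot_of_pos (by exact_mod_cast hc), eexp_bot]

lemma fN_top (hN : N < 0) {x : X} (hx : f x = ⊤) :
    fN f N x = ⊤ := by
  have hc : (0:ℝ) < -1/N := div_pos_iff.2 (Or.inr ⟨by norm_num, hN⟩)
  rw [fN, hx, EReal.coe_mul_top_of_pos (by exact_mod_cast hc), eexp_top]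

lemma fN_ne_top (hN : N < 0) {x : X} (hx : f x ≠ ⊤) : fN f N x ≠ ⊤ := by
  by_cases hb : f x = ⊥
  · rw [fN_bot hN hb]; exact ENNReal.zero_ne_top
  · obtain ⟨v, hv⟩ : ∃ v : ℝ, f x = (v : EReal) := ⟨(f x).toReal, (EReal.coe_toReal hx hb).symm⟩
    rw [fN_real hN hv]; exact ENNReal.ofReal_ne_top

lemma fN_pos (hN : N < 0) {x : X} (hx : f x ≠ ⊥) : 0 < fN f N x := by
  by_cases ht : f x = ⊤
  · rw [fN_top hN ht]; simp
  · obtain ⟨v, hv⟩ : ∃ v : ℝ, f x = (v : EReal) := ⟨(f x).toReal, (EReal.coe_toReal ht hx).symm⟩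
    rw [fN_real hN hv]
    exact ENNReal.ofReal_pos.2 (Real.exp_pos _)

lemma fN_lb (hN : N < 0) {x : X} {lam : ℝ} (h : (lam : EReal) < f x) :
    ENNReal.ofReal (Real.exp ((-1/N) * lam)) ≤ fN f N x := by
  have hc : (0:ℝ) < -1/N := div_pos_iff.2 (Or.inr ⟨by norm_num, hN⟩)
  by_cases ht : f x = ⊤
  · rw [fN_top hN ht]; exact le_top
  · have hb : f x ≠ ⊥ := fun hb => by simp [hb] at h
    obtain ⟨v, hv⟩ : ∃ v : ℝ, f x = (v : EReal) := ⟨(f x).toReal, (EReal.coe_toReal ht hb).symm⟩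
    rw [hv] at h
    rw [fN_real hN hv]
    exact ENNReal.ofReal_le_ofReal (Real.exp_le_exp.2 (by
      have : lam < v := EReal.coe_lt_coe_iff.1 h
      nlinarith))

/-- EReal cancellation helper. -/
lemma ereal_le_sub {A : EReal} {b c : ℝ} (h : A + (c : EReal) ≤ (b : EReal)) :
    A ≤ ((b - c : ℝ) : EReal) := by
  induction A using EReal.rec with
  | bot => exact bot_le
  | top => rw [EReal.top_add_coe] at h; exact absurd h (by simp)
  | coe a =>
    rw [← EReal.coe_add, EReal.coe_le_coe_iff] at h
    rw [EReal.coe_le_coe_iff]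
    linarith

lemma coe_ennreal_finite {x : ℝ≥0∞} (hx : x ≠ ⊤) :
    (x : EReal) = ((x.toReal : ℝ) : EReal) := by
  rw [← ENNReal.ofReal_toReal hx, EReal.coe_ennreal_ofReal,
    max_eq_left ENNReal.toReal_nonneg, ENNReal.toReal_ofReal ENNReal.toReal_nonneg]

/-- identification of the distortion coefficient under the admissibility conditions -/
lemma sigma_eq {K N : ℝ} (hN : N < 0) {θ : ℝ} (hθ : 0 < θ)
    (hθπ : K < 0 → θ < π * Real.sqrt (N/K)) (t : ℝ) :
    sigmaKN K N t θ = ENNReal.ofReal (sKN K N (t*θ) / sKN K N θ) := by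
  rcases lt_trichotomy K 0 with hK | hK | hK
  · have hb : 0 < Real.sqrt (N/K) := Real.sqrt_pos.2 (div_pos_iff.2 (Or.inr ⟨hN, hK⟩))
    have hbb : Real.sqrt (N/K) ^ 2 = N/K := Real.sq_sqrt (div_pos_iff.2 (Or.inr ⟨hN, hK⟩)).le
    have h1 : N * π ^ 2 < K * θ ^ 2 := by
      have h2 : θ^2 < π^2 * (N/K) := by
        have := hθπ hK
        nlinarith [Real.pi_pos]
      have h3 : K * (π^2 * (N/K)) = N * π^2 := by
        rw [mul_comm, mul_assoc, div_mul_cancel₀ _ hK.ne]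
        ring
      have h4 := mul_lt_mul_of_neg_left h2 hK
      linarith
    have h2 : K * θ ^ 2 < 0 := mul_neg_of_neg_of_pos hK (by positivity)
    rw [sigmaKN, if_pos (Or.inl ⟨h1, h2⟩)]
  · subst hK
    rw [sigmaKN]
    norm_num
    rw [sKN_of_zero, sKN_of_zero, mul_div_assoc, div_self hθ.ne', mul_one]
  · have h1 : 0 < K * θ ^ 2 := by positivity
    rw [sigmaKN, if_pos (Or.inr h1)]

/-- relating the hypothesis `θ < π √(N/K)` to `θ √(K/N) < π`. -/
lemma dist_cond_iff {K N θ : ℝ} (hN : N < 0) (hK : K < 0) :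
    θ < π * Real.sqrt (N/K) ↔ θ * Real.sqrt (K/N) < π := by
  have ha : 0 < Real.sqrt (K/N) := sqrtKN_pos hN hK
  have : Real.sqrt (N/K) = (Real.sqrt (K/N))⁻¹ := by
    rw [← Real.sqrt_inv, inv_div]
  rw [this, ← div_eq_mul_inv, lt_div_iff₀ ha]

end Part3
section Part4
open Real Filter Set

lemma frequently_slope_of_diniUR {g : ℝ → ℝ} {t b r : ℝ}
    (hd : diniUR g t ≤ (b : EReal)) (hr : b < r) :
    ∀ᶠ h in 𝓝[>] (0:ℝ), (g (t+h) - g t)/h < r := by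
  have h1 : diniUR g t < ((r : ℝ) : EReal) := lt_of_le_of_lt hd (EReal.coe_lt_coe_iff.2 hr)
  unfold diniUR at h1
  have h2 := Filter.eventually_lt_of_limsup_lt h1
  exact h2.mono fun h hh => EReal.coe_lt_coe_iff.1 hh

lemma frequently_slope_trans {F : ℝ → ℝ} {x r : ℝ}
    (h : ∀ᶠ h' in 𝓝[>] (0:ℝ), (F (x + h') - F x)/h' < r) :
    ∃ᶠ z in 𝓝[>] x, slope F x z < r := by
  apply Filter.Eventually.frequently
  obtain ⟨u, hu, hsub⟩ := mem_nhdsGT_iff_exists_Ioo_subset.1 h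
  have hxu : x < x + u := by linarith [mem_Ioi.1 hu]
  refine mem_of_superset (Ioo_mem_nhdsGT hxu) ?_
  intro z hz
  have hz' : z - x ∈ Ioo (0:ℝ) u := ⟨by linarith [hz.1], by linarith [hz.2]⟩
  have h2 : (F (x + (z - x)) - F x) / (z - x) < r := hsub hz'
  rw [show x + (z - x) = z by ring] at h2
  rw [mem_setOf_eq, slope_def_field]
  exact h2

lemma exists_ofReal_lt {T : ℝ≥0∞} (hT : 0 < T) : ∃ d : ℝ, 0 < d ∧ ENNReal.ofReal d < T := by
  by_cases hTtop : T = ⊤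
  · exact ⟨1, one_pos, by simp [hTtop]⟩
  · have h1 : 0 < T.toReal := ENNReal.toReal_pos hT.ne' hTtop
    refine ⟨T.toReal / 2, by linarith, ?_⟩
    calc ENNReal.ofReal (T.toReal / 2) < ENNReal.ofReal T.toReal :=
          (ENNReal.ofReal_lt_ofReal_iff h1).2 (by linarith)
      _ = T := ENNReal.ofReal_toReal hTtop

end Part4

end KNAuxSec

end KNPaper

set_option maxHeartbeats 1000000 in
theorem stmt_15 {X : Type*} [MetricSpace X]
    (hgeo : ∀ x₀ x₁ : X, ∃ γ : ℝ → X, KNPaper.IsGeodesic γ ∧ γ 0 = x₀ ∧ γ 1 = x₁)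
    (f : X → EReal) (hlsc : LowerSemicontinuous f) (hdense : Dense (KNPaper.Dom f))
    (K N : ℝ) (hN : N < 0)
    (hex : ∀ y₀ : X, f y₀ ≠ ⊥ → ∃ (T : ℝ≥0∞) (y : ℝ → X),
      KNPaper.IsEVIKN f K N T y ∧ KNPaper.StartsAt y y₀) :
    KNPaper.KNConvex f K N := by
  classical
  open KNPaper in
  intro x₀ _ x₁ _ hx₀top hx₁top hdistK
  obtain ⟨γ, hγ, hγ0, hγ1⟩ := hgeo x₀ x₁
  refine ⟨γ, hγ, fun _ _ => Set.mem_univ _, hγ0, hγ1, ?_⟩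
  intro s hs
  obtain ⟨hs0, hs1⟩ := hs
  by_cases hθ0 : dist x₀ x₁ = 0
  · -- degenerate case : the two endpoints coincide
    have hx01 : x₁ = x₀ := (dist_eq_zero.1 hθ0).symm
    have hγs : γ s = x₀ := by
      have h := hγ s ⟨hs0, hs1⟩ 0 ⟨le_refl 0, zero_le_one⟩
      rw [hγ0, hγ1, hθ0, mul_zero] at h
      exact dist_eq_zero.1 h
    have hσ : ∀ u : ℝ, KNPaper.sigmaKN K N u (dist x₀ x₁) = ENNReal.ofReal u := by
      intro u
      rw [hθ0]
      simp [KNPaper.sigmaKN]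
    rw [hσ, hσ, hγs, hx01, ← add_mul, ← ENNReal.ofReal_add (by linarith) hs0,
      show 1 - s + s = (1:ℝ) by ring]
    simp
  · -- main case
    have hθpos : 0 < dist x₀ x₁ := dist_nonneg.lt_of_ne (Ne.symm hθ0)
    set θ := dist x₀ x₁ with hθdef
    have hσ1 := KNPaper.sigma_eq (K := K) hN hθpos hdistK (1 - s)
    have hσ2 := KNPaper.sigma_eq (K := K) hN hθpos hdistK s
    rw [hσ1, hσ2]
    set p := s * θ with hpdef
    set q := (1 - s) * θ with hqdef
    have hp0 : 0 ≤ p := mul_nonneg hs0 hθpos.le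
    have hq0 : 0 ≤ q := mul_nonneg (by linarith) hθpos.le
    have hpq : p + q = θ := by rw [hpdef, hqdef]; ring
    have hθa : K < 0 → θ * Real.sqrt (K/N) < Real.pi :=
      fun hK => (KNPaper.dist_cond_iff hN hK).1 (hdistK hK)
    have hsθ : 0 < KNPaper.sKN K N θ := KNPaper.sKN_pos hN hθpos hθa
    set w₀ := KNPaper.sKN K N q / KNPaper.sKN K N θ with hw₀def
    set w₁ := KNPaper.sKN K N p / KNPaper.sKN K N θ with hw₁def
    have hqθ : q ≤ θ := by
      rw [hqdef]
      have h1 := mul_le_mul_of_nonneg_right (show 1 - s ≤ 1 by linarith only [hs0]) hθpos.le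
      linarith only [h1]
    have hpθ : p ≤ θ := by
      rw [hpdef]
      have h1 := mul_le_mul_of_nonneg_right hs1 hθpos.le
      linarith only [h1]
    have hw₀0 : 0 ≤ w₀ := by
      apply div_nonneg _ hsθ.le
      apply KNPaper.sKN_nonneg hN hq0
      intro hK
      have h1 := mul_le_mul_of_nonneg_right hqθ (KNPaper.sqrtKN_pos hN hK).le
      linarith [hθa hK]
    have hw₁0 : 0 ≤ w₁ := by
      apply div_nonneg _ hsθ.le
      apply KNPaper.sKN_nonneg hN hp0
      intro hK
      have h1 := mul_le_mul_of_nonneg_right hpθ (KNPaper.sqrtKN_pos hN hK).le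
      linarith [hθa hK]
    clear_value w₀ w₁
    have oneDw : ∀ v : ℝ, w₀ * KNPaper.gg K N p + w₁ * KNPaper.gg K N q
        ≤ w₀ * KNPaper.gg K N v + w₁ * KNPaper.gg K N (θ - v) := by
      intro v
      have h := KNPaper.oneD (K := K) hN p q v hp0 hq0 (fun hK => by rw [hpq]; exact (hθa hK).le)
      rw [show p + q - v = θ - v by rw [← hpq]] at h
      have h2 := mul_le_mul_of_nonneg_left h (inv_nonneg.2 hsθ.le)
      calc w₀ * KNPaper.gg K N p + w₁ * KNPaper.gg K N q
          = (KNPaper.sKN K N θ)⁻¹ * (KNPaper.sKN K N q * KNPaper.gg K N p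
            + KNPaper.sKN K N p * KNPaper.gg K N q) := by rw [hw₀def, hw₁def]; ring
        _ ≤ (KNPaper.sKN K N θ)⁻¹ * (KNPaper.sKN K N q * KNPaper.gg K N v
            + KNPaper.sKN K N p * KNPaper.gg K N (θ - v)) := h2
        _ = w₀ * KNPaper.gg K N v + w₁ * KNPaper.gg K N (θ - v) := by
            rw [hw₀def, hw₁def]; ring
    have idw : w₀ + w₁ - (2*K/N) * (w₀ * KNPaper.gg K N p + w₁ * KNPaper.gg K N q) = 1 := by
      have h := KNPaper.idB (K := K) hN p q
      rw [hpq] at h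
      have h2 : (KNPaper.sKN K N q + KNPaper.sKN K N p
          - (2*K/N) * (KNPaper.sKN K N q * KNPaper.gg K N p
            + KNPaper.sKN K N p * KNPaper.gg K N q)) / KNPaper.sKN K N θ
          = KNPaper.sKN K N θ / KNPaper.sKN K N θ := by rw [h]
      rw [div_self hsθ.ne'] at h2
      rw [← h2, hw₀def, hw₁def]
      ring
    have hdγ0 : dist (γ s) x₀ = p := by
      have h := hγ s ⟨hs0, hs1⟩ 0 ⟨le_refl 0, zero_le_one⟩
      rw [hγ0, hγ1] at h
      rw [h, hpdef, abs_sub_comm, sub_zero, abs_of_nonneg hs0]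
    have hdγ1 : dist (γ s) x₁ = q := by
      have h := hγ s ⟨hs0, hs1⟩ 1 ⟨zero_le_one, le_refl 1⟩
      rw [hγ0, hγ1] at h
      rw [h, hqdef, abs_of_nonneg (by linarith : (0:ℝ) ≤ 1 - s)]
    set G : X → ℝ := fun u => w₀ * KNPaper.gg K N (dist u x₀)
      + w₁ * KNPaper.gg K N (dist u x₁) with hGdef
    have hGcont : Continuous G := by
      apply Continuous.add
      · exact continuous_const.mul
          (KNPaper.gg_continuous.comp (continuous_id.dist continuous_const))
      · exact continuous_const.mul
          (KNPaper.gg_continuous.comp (continuous_id.dist continuous_const))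
    set G₀ := w₀ * KNPaper.gg K N p + w₁ * KNPaper.gg K N q with hG₀def
    have hGγs : G (γ s) = G₀ := by
      simp only [hGdef, hdγ0, hdγ1, hG₀def]
    clear_value G G₀
    have hLemA : ∀ u : X, (K < 0 → dist u x₀ * Real.sqrt (K/N) ≤ Real.pi) →
        (K < 0 → dist u x₁ * Real.sqrt (K/N) ≤ Real.pi) → G₀ ≤ G u := by
      intro u hu0 hu1
      have htri : θ ≤ dist u x₀ + dist u x₁ := by
        rw [hθdef]
        have h1 := dist_triangle x₀ u x₁
        rw [dist_comm x₀ u] at h1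
        exact h1
      by_cases hcase : dist u x₀ ≤ θ
      · have h1 : KNPaper.gg K N (θ - dist u x₀) ≤ KNPaper.gg K N (dist u x₁) :=
          KNPaper.gg_mono hN (by linarith) (by linarith) hu1
        have h2 := oneDw (dist u x₀)
        have h3 := mul_le_mul_of_nonneg_left h1 hw₁0
        simp only [hGdef]
        linarith
      · push_neg at hcase
        have h2 := oneDw θ
        rw [show θ - θ = (0:ℝ) by ring, KNPaper.gg_zero, mul_zero, add_zero] at h2
        have h1 : KNPaper.gg K N θ ≤ KNPaper.gg K N (dist u x₀) :=
          KNPaper.gg_mono hN hθpos.le hcase.le hu0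
        have h3 := mul_le_mul_of_nonneg_left h1 hw₀0
        have h4 : 0 ≤ w₁ * KNPaper.gg K N (dist u x₁) :=
          mul_nonneg hw₁0 (KNPaper.gg_nonneg _)
        simp only [hGdef]
        linarith
    have hfx₀ : KNPaper.fN f N x₀ ≠ ⊤ := KNPaper.fN_ne_top hN hx₀top
    have hfx₁ : KNPaper.fN f N x₁ ≠ ⊤ := KNPaper.fN_ne_top hN hx₁top
    set e₀ := (KNPaper.fN f N x₀).toReal with he₀def
    set e₁ := (KNPaper.fN f N x₁).toReal with he₁def
    have he₀0 : 0 ≤ e₀ := ENNReal.toReal_nonneg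
    have he₁0 : 0 ≤ e₁ := ENNReal.toReal_nonneg
    clear_value e₀ e₁
    rw [show KNPaper.fN f N x₀ = ENNReal.ofReal e₀ by
        rw [he₀def, ENNReal.ofReal_toReal hfx₀],
      show KNPaper.fN f N x₁ = ENNReal.ofReal e₁ by
        rw [he₁def, ENNReal.ofReal_toReal hfx₁],
      ← ENNReal.ofReal_mul hw₀0, ← ENNReal.ofReal_mul hw₁0,
      ← ENNReal.ofReal_add (mul_nonneg hw₀0 he₀0) (mul_nonneg hw₁0 he₁0)]
    set S := w₀ * e₀ + w₁ * e₁ with hSdef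
    clear_value S
    by_contra hcon
    push_neg at hcon
    have hS0 : 0 ≤ S := by
      rw [hSdef]; exact add_nonneg (mul_nonneg hw₀0 he₀0) (mul_nonneg hw₁0 he₁0)
    have hzbot : f (γ s) ≠ ⊥ := by
      intro hb
      rw [KNPaper.fN_bot hN hb] at hcon
      simp at hcon
    obtain ⟨lam, hlam1, hlam2⟩ :
        ∃ lam : ℝ, (lam : EReal) < f (γ s) ∧ S < Real.exp ((-1/N) * lam) := by
      by_cases htop : f (γ s) = ⊤
      · refine ⟨(-N) * Real.log (S + 1), ?_, ?_⟩
        · rw [htop]; exact EReal.coe_lt_top _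
        · rw [show (-1/N) * ((-N) * Real.log (S+1)) = Real.log (S+1) by field_simp [hN.ne],
            Real.exp_log (by linarith)]
          linarith
      · have hv : f (γ s) = (((f (γ s)).toReal : ℝ) : EReal) :=
          (EReal.coe_toReal htop hzbot).symm
        set v := (f (γ s)).toReal with hvdef
        rw [KNPaper.fN_real hN hv] at hcon
        have hSe : S < Real.exp ((-1/N) * v) :=
          (ENNReal.ofReal_lt_ofReal_iff (Real.exp_pos _)).1 hcon
        have hmax : max S 0 < Real.exp ((-1/N)*v) := max_lt hSe (Real.exp_pos _)
        set m := (max S 0 + Real.exp ((-1/N)*v))/2 with hmdef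
        have hm1 : S < m := by
          have h5 := le_max_left S 0
          rw [hmdef]; linarith
        have hm0 : 0 < m := by
          have h5 := le_max_right S 0
          rw [hmdef]; linarith
        have hmv : m < Real.exp ((-1/N)*v) := by rw [hmdef]; linarith
        refine ⟨(-N) * Real.log m, ?_, ?_⟩
        · rw [hv]
          apply EReal.coe_lt_coe_iff.2
          have hlog : Real.log m < (-1/N)*v := (Real.log_lt_iff_lt_exp hm0).2 hmv
          have h6 : (0:ℝ) < -N := by linarith
          have h7 := mul_lt_mul_of_pos_left hlog h6
          rw [show (-N) * ((-1/N)*v) = v by field_simp [hN.ne]] at h7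
          exact h7
        · rw [show (-1/N) * ((-N) * Real.log m) = Real.log m by field_simp [hN.ne],
            Real.exp_log hm0]
          exact hm1
    set m' := Real.exp ((-1/N) * lam) with hm'def
    have hm'0 : 0 < m' := hm'def ▸ Real.exp_pos _
    clear_value m'
    obtain ⟨T, y, hEVI, hstart⟩ := hex (γ s) hzbot
    obtain ⟨hT0, hycont, hydom, hineq⟩ := hEVI
    set cc := (-(N/2) * (1 - S/m'))/2 with hccdef
    clear_value cc
    have hSm : S/m' < 1 := (div_lt_one hm'0).2 hlam2
    have hcc0 : 0 < cc := by
      have h5 : 0 < -(N/2) := by linarith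
      have h6 : 0 < 1 - S/m' := by linarith
      rw [hccdef]
      nlinarith
    set η := cc/(|K|+1) with hηdef
    clear_value η
    have hη0 : 0 < η := by rw [hηdef]; exact div_pos hcc0 (by positivity)
    obtain ⟨δT, hδT0, hδTT⟩ := KNPaper.exists_ofReal_lt hT0
    have hCond : ∀ᶠ t in nhdsWithin (0:ℝ) (Set.Ioi 0),
        (t ∈ KNPaper.domT T ∧ (lam : EReal) < f (y t)) ∧ (|G (y t) - G₀| < η ∧
          (K < 0 → dist (y t) x₀ < Real.pi * Real.sqrt (N/K)
            ∧ dist (y t) x₁ < Real.pi * Real.sqrt (N/K))) := by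
      have h1 : ∀ᶠ t in nhdsWithin (0:ℝ) (Set.Ioi 0), t ∈ KNPaper.domT T := by
        refine Filter.mem_of_superset (Ioo_mem_nhdsGT hδT0) ?_
        intro t ht
        exact ⟨ht.1, lt_of_le_of_lt (ENNReal.ofReal_le_ofReal ht.2.le) hδTT⟩
      have h2 : ∀ᶠ t in nhdsWithin (0:ℝ) (Set.Ioi 0), (lam : EReal) < f (y t) :=
        hstart.eventually (hlsc (γ s) (lam : EReal) hlam1)
      have h3 : ∀ᶠ t in nhdsWithin (0:ℝ) (Set.Ioi 0), |G (y t) - G₀| < η := by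
        have hG : Filter.Tendsto (fun t => G (y t)) (nhdsWithin (0:ℝ) (Set.Ioi 0)) (nhds G₀) := by
          rw [← hGγs]
          exact (hGcont.tendsto (γ s)).comp hstart
        have h5 := Metric.tendsto_nhds.1 hG η hη0
        exact h5.mono fun t ht => by rw [Real.dist_eq] at ht; exact ht
      have h4 : ∀ᶠ t in nhdsWithin (0:ℝ) (Set.Ioi 0),
          K < 0 → dist (y t) x₀ < Real.pi * Real.sqrt (N/K)
            ∧ dist (y t) x₁ < Real.pi * Real.sqrt (N/K) := by
        by_cases hK : K < 0
        · have hb0 : Filter.Tendsto (fun t => dist (y t) x₀)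
              (nhdsWithin (0:ℝ) (Set.Ioi 0)) (nhds p) := by
            rw [← hdγ0]
            exact ((continuous_id.dist continuous_const).tendsto (γ s)).comp hstart
          have hb1 : Filter.Tendsto (fun t => dist (y t) x₁)
              (nhdsWithin (0:ℝ) (Set.Ioi 0)) (nhds q) := by
            rw [← hdγ1]
            exact ((continuous_id.dist continuous_const).tendsto (γ s)).comp hstart
          have hpp : p < Real.pi * Real.sqrt (N/K) := lt_of_le_of_lt hpθ (hdistK hK)
          have hqq : q < Real.pi * Real.sqrt (N/K) := lt_of_le_of_lt hqθ (hdistK hK)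
          filter_upwards [hb0.eventually_lt_const hpp, hb1.eventually_lt_const hqq]
            with t h5 h6
          exact fun _ => ⟨h5, h6⟩
        · exact Filter.Eventually.of_forall fun t hK' => absurd hK' hK
      filter_upwards [h1, h2, h3, h4] with t ht1 ht2 ht3 ht4
      exact ⟨⟨ht1, ht2⟩, ⟨ht3, ht4⟩⟩
    obtain ⟨δ', hδ'mem, hδ'sub⟩ := mem_nhdsGT_iff_exists_Ioo_subset.1 hCond
    have hδ'0 : 0 < δ' := Set.mem_Ioi.1 hδ'mem
    set t₁ := δ'/2 with ht₁def
    clear_value t₁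
    have ht₁0 : 0 < t₁ := by rw [ht₁def]; linarith
    have ht₁δ : t₁ < δ' := by rw [ht₁def]; linarith
    have hkey : ∀ t ∈ Set.Ioo (0:ℝ) δ', ∀ r : ℝ, -cc < r →
        ∀ᶠ h in nhdsWithin (0:ℝ) (Set.Ioi 0), (G (y (t + h)) - G (y t))/h < r := by
      intro t ht r hr
      obtain ⟨⟨htdom, hlamf⟩, hGη, hKd⟩ := hδ'sub ht
      have hyt := hydom t htdom
      have hfyt : KNPaper.fN f N (y t) ≠ ⊤ := KNPaper.fN_ne_top hN hyt.1
      have hfyt0 : KNPaper.fN f N (y t) ≠ 0 := (KNPaper.fN_pos hN hyt.2).ne'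
      have hm'le : ENNReal.ofReal m' ≤ KNPaper.fN f N (y t) := by
        rw [hm'def]; exact KNPaper.fN_lb hN hlamf
      have evib : ∀ z : X, KNPaper.fN f N z ≠ ⊤ →
          (K < 0 → dist (y t) z < Real.pi * Real.sqrt (N/K)) →
          KNPaper.diniUR (fun τ => KNPaper.sKN K N (dist (y τ) z / 2)^2) t ≤
            ((((N/2) * (1 - (KNPaper.fN f N z / KNPaper.fN f N (y t)).toReal)
              - K * KNPaper.sKN K N (dist (y t) z / 2)^2 : ℝ)) : EReal) := by
        intro z hznt hz
        have hzcl : z ∈ closure (KNPaper.Dom f) := by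
          rw [hdense.closure_eq]; trivial
        have h := hineq t htdom z hzcl hz
        have hrne : KNPaper.fN f N z / KNPaper.fN f N (y t) ≠ ⊤ :=
          (ENNReal.div_lt_top hznt hfyt0).ne
        rw [KNPaper.coe_ennreal_finite hrne] at h
        rw [show ((1:EReal) - (((KNPaper.fN f N z / KNPaper.fN f N (y t)).toReal : ℝ) : EReal))
            = (((1 - (KNPaper.fN f N z / KNPaper.fN f N (y t)).toReal : ℝ)) : EReal) by
          rw [← EReal.coe_one, ← EReal.coe_sub], ← EReal.coe_mul] at h
        exact KNPaper.ereal_le_sub h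
      set ρ₀ := (KNPaper.fN f N x₀ / KNPaper.fN f N (y t)).toReal with hρ₀def
      set ρ₁ := (KNPaper.fN f N x₁ / KNPaper.fN f N (y t)).toReal with hρ₁def
      clear_value ρ₀ ρ₁
      have hρ₀le : ρ₀ ≤ e₀ / m' := by
        rw [hρ₀def]
        apply ENNReal.toReal_le_of_le_ofReal (div_nonneg he₀0 hm'0.le)
        calc KNPaper.fN f N x₀ / KNPaper.fN f N (y t)
            ≤ ENNReal.ofReal e₀ / ENNReal.ofReal m' := by
              apply ENNReal.div_le_div _ hm'le
              rw [he₀def, ENNReal.ofReal_toReal hfx₀]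
          _ = ENNReal.ofReal (e₀ / m') := (ENNReal.ofReal_div_of_pos hm'0).symm
      have hρ₁le : ρ₁ ≤ e₁ / m' := by
        rw [hρ₁def]
        apply ENNReal.toReal_le_of_le_ofReal (div_nonneg he₁0 hm'0.le)
        calc KNPaper.fN f N x₁ / KNPaper.fN f N (y t)
            ≤ ENNReal.ofReal e₁ / ENNReal.ofReal m' := by
              apply ENNReal.div_le_div _ hm'le
              rw [he₁def, ENNReal.ofReal_toReal hfx₁]
          _ = ENNReal.ofReal (e₁ / m') := (ENNReal.ofReal_div_of_pos hm'0).symm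
      set r₀ := (N/2) * (1 - ρ₀) - K * KNPaper.sKN K N (dist (y t) x₀ / 2)^2 with hr₀def
      set r₁ := (N/2) * (1 - ρ₁) - K * KNPaper.sKN K N (dist (y t) x₁ / 2)^2 with hr₁def
      clear_value r₀ r₁
      have hD₀ : KNPaper.diniUR (fun τ => KNPaper.sKN K N (dist (y τ) x₀ / 2)^2) t
          ≤ ((r₀ : ℝ) : EReal) := by
        rw [hr₀def, hρ₀def]
        exact evib x₀ hfx₀ (fun hK => (hKd hK).1)
      have hD₁ : KNPaper.diniUR (fun τ => KNPaper.sKN K N (dist (y τ) x₁ / 2)^2) t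
          ≤ ((r₁ : ℝ) : EReal) := by
        rw [hr₁def, hρ₁def]
        exact evib x₁ hfx₁ (fun hK => (hKd hK).2)
      have hGyt : w₀ * KNPaper.sKN K N (dist (y t) x₀ / 2)^2
          + w₁ * KNPaper.sKN K N (dist (y t) x₁ / 2)^2 = G (y t) := by
        simp only [hGdef, KNPaper.gg]
      have hcomb : w₀ * r₀ + w₁ * r₁ ≤ -cc := by
        have hA1 : w₀ * ρ₀ + w₁ * ρ₁ ≤ S/m' := by
          have b0 := mul_le_mul_of_nonneg_left hρ₀le hw₀0
          have b1 := mul_le_mul_of_nonneg_left hρ₁le hw₁0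
          have hb : w₀ * (e₀/m') + w₁ * (e₁/m') = (w₀*e₀ + w₁*e₁)/m' := by ring
          rw [hSdef]
          linarith [hb]
        have hA2 : -(N/2) * (w₀ * ρ₀ + w₁ * ρ₁) ≤ -(N/2) * (S/m') :=
          mul_le_mul_of_nonneg_left hA1 (by linarith)
        have hA3 : -K * (G (y t)) ≤ -K * G₀ + |K| * η := by
          have h5 : -K * (G (y t) - G₀) ≤ |K| * η := by
            calc -K * (G (y t) - G₀) ≤ |(-K) * (G (y t) - G₀)| := le_abs_self _
              _ = |K| * |G (y t) - G₀| := by rw [abs_mul, abs_neg]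
              _ ≤ |K| * η := mul_le_mul_of_nonneg_left hGη.le (abs_nonneg K)
          linarith
        have hKη : |K| * η ≤ cc := by
          have h6 : |K| ≤ |K| + 1 := by linarith
          have h7 : (0:ℝ) < |K| + 1 := by positivity
          calc |K| * η = |K| * (cc/(|K|+1)) := by rw [hηdef]
            _ ≤ (|K|+1) * (cc/(|K|+1)) := mul_le_mul_of_nonneg_right h6 (by positivity)
            _ = cc := by field_simp
        have hidK : (N/2)*(2*K/N) = K := by
          rw [div_mul_div_comm, div_eq_iff (mul_ne_zero two_ne_zero hN.ne)]
          ring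
        have hid2 : (N/2)*(w₀+w₁) = N/2 + K * G₀ := by
          have h7 : w₀ + w₁ = 1 + (2*K/N) * G₀ := by linarith [idw]
          calc (N/2)*(w₀+w₁) = (N/2) * 1 + ((N/2)*(2*K/N)) * G₀ := by rw [h7]; ring
            _ = N/2 + K * G₀ := by rw [hidK]; ring
        have hexp : w₀ * r₀ + w₁ * r₁
            = (N/2)*(w₀+w₁) - (N/2)*(w₀*ρ₀+w₁*ρ₁)
              - K * (w₀ * KNPaper.sKN K N (dist (y t) x₀ / 2)^2
                + w₁ * KNPaper.sKN K N (dist (y t) x₁ / 2)^2) := by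
          rw [hr₀def, hr₁def]; ring
        have hccid : (N/2) * (1 - S/m') = -2*cc := by rw [hccdef]; ring
        rw [hexp, hGyt]
        linarith only [hA2, hA3, hKη, hid2, hccid]
      set ε := (r + cc)/(w₀+w₁+1) with hεdef
      clear_value ε
      have hWpos : (0:ℝ) < w₀ + w₁ + 1 := by linarith
      have hε0 : 0 < ε := by
        rw [hεdef]
        exact div_pos (by linarith) hWpos
      have hev₀ := KNPaper.frequently_slope_of_diniUR hD₀ (lt_add_of_pos_right r₀ hε0)
      have hev₁ := KNPaper.frequently_slope_of_diniUR hD₁ (lt_add_of_pos_right r₁ hε0)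
      filter_upwards [hev₀, hev₁] with h hh₀ hh₁
      have hslope : (G (y (t+h)) - G (y t))/h
          = w₀ * (((fun τ => KNPaper.sKN K N (dist (y τ) x₀ / 2)^2) (t+h)
              - (fun τ => KNPaper.sKN K N (dist (y τ) x₀ / 2)^2) t)/h)
            + w₁ * (((fun τ => KNPaper.sKN K N (dist (y τ) x₁ / 2)^2) (t+h)
              - (fun τ => KNPaper.sKN K N (dist (y τ) x₁ / 2)^2) t)/h) := by
        simp only [hGdef, KNPaper.gg]
        ring
      have hb₀ := mul_le_mul_of_nonneg_left hh₀.le hw₀0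
      have hb₁ := mul_le_mul_of_nonneg_left hh₁.le hw₁0
      have hεW : ε * (w₀ + w₁) < r + cc := by
        rw [hεdef, div_mul_eq_mul_div, div_lt_iff₀ hWpos]
        have h9 : 0 < r + cc := by linarith only [hr]
        have h10 : w₀ + w₁ < w₀ + w₁ + 1 := by linarith only []
        exact mul_lt_mul_of_pos_left h10 h9
      rw [hslope]
      linarith only [hb₀, hb₁, hcomb, hεW]
    have hfence : ∀ t₀ ∈ Set.Ioo (0:ℝ) t₁, G (y t₁) ≤ G (y t₀) - cc*(t₁ - t₀) := by
      intro t₀ ht₀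
      have hIccsub : Set.Icc t₀ t₁ ⊆ KNPaper.domT T := by
        intro τ hτ
        exact (hδ'sub ⟨lt_of_lt_of_le ht₀.1 hτ.1, lt_of_le_of_lt hτ.2 ht₁δ⟩).1.1
      have hcont : ContinuousOn (fun τ => G (y τ)) (Set.Icc t₀ t₁) :=
        hGcont.comp_continuousOn (hycont.mono hIccsub)
      have happ := image_le_of_liminf_slope_right_le_deriv_boundary
        (f := fun τ => G (y τ)) (a := t₀) (b := t₁)
        (B := fun τ => G (y t₀) - cc*(τ - t₀)) (B' := fun _ => -cc)
        hcont (by simp)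
        ((continuous_const.sub (continuous_const.mul
          (continuous_id.sub continuous_const))).continuousOn)
        (fun x _ => by
          have h5 : HasDerivAt (fun τ => G (y t₀) - cc*(τ - t₀)) (-cc) x := by
            simpa using (((hasDerivAt_id x).sub_const t₀).const_mul cc).const_sub (G (y t₀))
          exact h5.hasDerivWithinAt)
        (fun x hx r hr => by
          have hxδ : x ∈ Set.Ioo (0:ℝ) δ' :=
            ⟨lt_of_lt_of_le ht₀.1 hx.1, lt_trans hx.2 ht₁δ⟩
          exact KNPaper.frequently_slope_trans (hkey x hxδ r hr))
      have h6 := happ (Set.right_mem_Icc.2 ht₀.2.le)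
      simpa using h6
    have hylim : Filter.Tendsto (fun t₀ => G (y t₀))
        (nhdsWithin (0:ℝ) (Set.Ioi 0)) (nhds G₀) := by
      rw [← hGγs]
      exact (hGcont.tendsto (γ s)).comp hstart
    have hlim : Filter.Tendsto (fun t₀ : ℝ => G (y t₀) - cc*(t₁ - t₀))
        (nhdsWithin (0:ℝ) (Set.Ioi 0)) (nhds (G₀ - cc*t₁)) := by
      have h3 : Filter.Tendsto (fun t₀ : ℝ => cc*(t₁ - t₀)) (nhds (0:ℝ))
          (nhds (cc*(t₁ - 0))) :=
        (continuous_const.mul (continuous_const.sub continuous_id)).tendsto 0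
      rw [sub_zero] at h3
      exact hylim.sub (h3.mono_left nhdsWithin_le_nhds)
    have hle : G (y t₁) ≤ G₀ - cc*t₁ := by
      apply ge_of_tendsto hlim
      filter_upwards [Ioo_mem_nhdsGT ht₁0] with t₀ ht₀
      exact hfence t₀ ht₀
    have ht₁cond := hδ'sub ⟨ht₁0, ht₁δ⟩
    have hgeA : G₀ ≤ G (y t₁) := by
      apply hLemA
      · exact fun hK => ((KNPaper.dist_cond_iff hN hK).1 (ht₁cond.2.2 hK).1).le
      · exact fun hK => ((KNPaper.dist_cond_iff hN hK).1 (ht₁cond.2.2 hK).2).le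
    linarith only [hle, hgeA, mul_pos hcc0 ht₁0]
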